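/- Let A be an N×N real matrix, ε > 0, and θ₀ = (θ₁,…,θ_N) ∈ ℝ^N. Suppose the complex vector x₀ with components (x₀)_k = exp(i θ_k) is an eigenvector of A associated with a real eigenvalue λ. Then for every t ≥ 0 the vector x(t) = exp(ε t A) x₀ (where exp denotes the matrix exponential) satisfies x(t) = exp(λ ε t) x₀, and in particular for every index k the complex argument of x(t)_k equals the complex argument of (x₀)_k. (That is, θ₀ is an equilibrium point of the analytical Kuramoto model.) -/

import Mathlib

open Complex Matrix

lemma exp_mulVec_eigen {N : ℕ} (M : Matrix (Fin N) (Fin N) ℂ) (x : Fin N → ℂ) (μ : ℂ)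
    (h : M.mulVec x = μ • x) :
    (NormedSpace.exp M).mulVec x = Complex.exp μ • x := by
  letI : SeminormedRing (Matrix (Fin N) (Fin N) ℂ) := Matrix.linftyOpSemiNormedRing
  letI : NormedRing (Matrix (Fin N) (Fin N) ℂ) := Matrix.linftyOpNormedRing
  letI : NormedAlgebra ℂ (Matrix (Fin N) (Fin N) ℂ) := Matrix.linftyOpNormedAlgebra
  have hpow : ∀ n : ℕ, (M ^ n).mulVec x = μ ^ n • x := by
    intro n
    induction n with
    | zero => simp
    | succ n ih =>
      rw [pow_succ', pow_succ', ← Matrix.mulVec_mulVec, ih, Matrix.mulVec_smul, h,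
        smul_smul, mul_comm]
  -- the linear map `B ↦ B.mulVec x`
  let φ : Matrix (Fin N) (Fin N) ℂ →ₗ[ℂ] (Fin N → ℂ) :=
    { toFun := fun B => B.mulVec x
      map_add' := fun B C => Matrix.add_mulVec B C x
      map_smul' := fun c B => Matrix.smul_mulVec c B x }
  have hφc : Continuous φ := φ.continuous_of_finiteDimensional
  have hsum : Summable fun n : ℕ => (Nat.factorial n : ℂ)⁻¹ • M ^ n :=
    NormedSpace.expSeries_summable' (𝕂 := ℂ) M
  have hmap : (NormedSpace.exp M).mulVec x
      = ∑' n : ℕ, ((Nat.factorial n : ℂ)⁻¹ * μ ^ n) • x := by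
    have : φ (NormedSpace.exp M) = ∑' n : ℕ, φ ((Nat.factorial n : ℂ)⁻¹ • M ^ n) := by
      rw [NormedSpace.exp_eq_tsum (𝕂 := ℂ)]
      exact hsum.hasSum.map φ hφc |>.tsum_eq.symm
    simpa only [φ, LinearMap.coe_mk, AddHom.coe_mk, Matrix.smul_mulVec, hpow,
      smul_smul] using this
  rw [hmap, Summable.tsum_smul_const]
  · congr 1
    rw [Complex.exp_eq_exp_ℂ, NormedSpace.exp_eq_tsum (𝕂 := ℂ)]
    simp [smul_eq_mul]
  · simpa [smul_eq_mul] using NormedSpace.expSeries_summable' (𝕂 := ℂ) μ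

/-- If `x₀ = e^{iθ₀}` (componentwise) is an eigenvector of the real matrix `A`
associated with a real eigenvalue `λ`, then for all `t ≥ 0` the solution
`x(t) = exp(ε t A) x₀` of the analytical Kuramoto model satisfies
`x(t) = e^{λ ε t} x₀`, and componentwise the argument of `x(t)` equals that of `x₀`:
`θ₀` is an equilibrium point of the analytical Kuramoto model. -/
theorem analytical_KM_equilibrium (N : ℕ) (A : Matrix (Fin N) (Fin N) ℝ)
    (ε : ℝ) (hε : 0 < ε) (θ : Fin N → ℝ) (lam : ℝ)
    (hx : (A.map Complex.ofReal).mulVec (fun k => Complex.exp (Complex.I * θ k))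
        = (lam : ℂ) • fun k => Complex.exp (Complex.I * θ k)) :
    ∀ t : ℝ, 0 ≤ t →
      (NormedSpace.exp (((ε : ℂ) * (t : ℂ)) • A.map Complex.ofReal)).mulVec
          (fun k => Complex.exp (Complex.I * θ k))
        = Complex.exp ((lam : ℂ) * ε * t) • (fun k => Complex.exp (Complex.I * θ k)) ∧
      ∀ k : Fin N,
        ((NormedSpace.exp (((ε : ℂ) * (t : ℂ)) • A.map Complex.ofReal)).mulVec
            (fun k => Complex.exp (Complex.I * θ k)) k).arg
          = (Complex.exp (Complex.I * θ k)).arg := by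
  intro t ht
  have heig : (((ε : ℂ) * (t : ℂ)) • A.map Complex.ofReal).mulVec
      (fun k => Complex.exp (Complex.I * θ k))
      = (((ε : ℂ) * t) * lam) • fun k => Complex.exp (Complex.I * θ k) := by
    rw [Matrix.smul_mulVec, hx, smul_smul, mul_comm]
  have hmain := exp_mulVec_eigen _ _ _ heig
  have hmu : ((ε : ℂ) * t) * lam = (lam : ℂ) * ε * t := by ring
  rw [hmu] at hmain
  refine ⟨hmain, fun k => ?_⟩
  have := congrFun hmain k
  rw [this]
  have hre : Complex.exp ((lam : ℂ) * ε * t) = ((Real.exp (lam * ε * t) : ℝ) : ℂ) := by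
    rw [Complex.ofReal_exp]; push_cast; ring_nf
  simp only [Pi.smul_apply, smul_eq_mul, hre]
  exact Complex.arg_real_mul _ (Real.exp_pos _)
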